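/- For all positive real parameters κ, θ, σ, the function x ↦ x²·π(x) is integrable on [0,∞) and ∫₀^∞ x² · π(x) dx = σ²/(2κ) + θ² + θ · (σ/√(2κ)) · φ(√(2κ)θ/σ) / (1 − Φ(−√(2κ)θ/σ)). -/

import Mathlib

open MeasureTheory Real

/-- The standard normal probability density function φ. -/
noncomputable def stdPhi (x : ℝ) : ℝ := Real.exp (-x ^ 2 / 2) / Real.sqrt (2 * Real.pi)

/-- The standard normal cumulative distribution function Φ. -/
noncomputable def stdCDF (x : ℝ) : ℝ := ∫ u in Set.Iic x, stdPhi u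

/-- The stationary density of the reflected Ornstein–Uhlenbeck process. -/
noncomputable def rouPi (κ θ σ x : ℝ) : ℝ :=
  (Real.sqrt (2 * κ) / σ) * stdPhi (Real.sqrt (2 * κ) * (x - θ) / σ) /
    (1 - stdCDF (-(Real.sqrt (2 * κ) * θ / σ)))

open Set Filter Topology

lemma stdPhi_eq (t : ℝ) : stdPhi t = Real.exp (-(1/2) * t ^ 2) * (Real.sqrt (2 * π))⁻¹ := by
  have h : -t ^ 2 / 2 = -(1/2) * t ^ 2 := by ring
  rw [stdPhi, h, div_eq_mul_inv]

lemma stdPhi_neg (t : ℝ) : stdPhi (-t) = stdPhi t := by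
  simp [stdPhi]

lemma stdPhi_pos (t : ℝ) : 0 < stdPhi t := by
  have h2π : (0:ℝ) < Real.sqrt (2 * π) := Real.sqrt_pos.mpr (by positivity)
  exact div_pos (Real.exp_pos _) h2π

lemma integrable_stdPhi : Integrable stdPhi := by
  have h := (integrable_exp_neg_mul_sq (b := (1/2:ℝ)) (by norm_num)).mul_const
    ((Real.sqrt (2 * π))⁻¹)
  exact h.congr (Filter.Eventually.of_forall fun x => (stdPhi_eq x).symm)

lemma integral_stdPhi : ∫ x, stdPhi x = 1 := by
  have h := integral_gaussian (1/2 : ℝ)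
  rw [show π / (1/2:ℝ) = 2 * π by ring] at h
  have h2 : ∫ x, stdPhi x = (∫ x : ℝ, Real.exp (-(1/2:ℝ) * x ^ 2)) * (Real.sqrt (2 * π))⁻¹ := by
    simp_rw [stdPhi_eq]
    rw [integral_mul_const]
  rw [h2, h, mul_inv_cancel₀]
  exact ne_of_gt (Real.sqrt_pos.mpr (by positivity))

lemma integral_stdPhi_Ioi (t : ℝ) : ∫ x in Ioi t, stdPhi x = 1 - stdCDF t := by
  have h := setIntegral_union (f := stdPhi) (μ := volume) (Set.Iic_disjoint_Ioi (le_refl t))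
    measurableSet_Ioi integrable_stdPhi.integrableOn integrable_stdPhi.integrableOn
  rw [Set.Iic_union_Ioi, setIntegral_univ, integral_stdPhi] at h
  rw [stdCDF]
  linarith

lemma stdCDF_lt_one (t : ℝ) : stdCDF t < 1 := by
  have h := integral_stdPhi_Ioi t
  have hpos : 0 < ∫ x in Ioi t, stdPhi x := by
    rw [setIntegral_pos_iff_support_of_nonneg_ae
      (Filter.Eventually.of_forall fun x => (stdPhi_pos x).le) integrable_stdPhi.integrableOn]
    have hsupp : Function.support stdPhi = Set.univ := by
      ext x
      simp [Function.mem_support, (stdPhi_pos x).ne']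
    rw [hsupp, Set.univ_inter, Real.volume_Ioi]
    exact ENNReal.zero_lt_top
  linarith

lemma integral_Ioi_comp_sub (f : ℝ → ℝ) (a d : ℝ) :
    ∫ x in Ioi a, f (x - d) = ∫ y in Ioi (a - d), f y := by
  have h := (measurePreserving_sub_right (volume : Measure ℝ) d).setIntegral_preimage_emb
    (MeasurableEquiv.subRight d).measurableEmbedding f (Ioi (a - d))
  have hpre : (· - d) ⁻¹' Ioi (a - d) = Ioi a := by
    ext x
    simp [sub_lt_sub_iff_right]
  rw [hpre] at h
  exact h

lemma rou_aux (c θ : ℝ) (hc : 0 < c) :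
    Integrable (fun x : ℝ => x ^ 2 * (c * stdPhi (c * (x - θ)))) ∧
    ∫ x in Ioi (0:ℝ), x ^ 2 * (c * stdPhi (c * (x - θ))) =
      (θ ^ 2 + 1 / c ^ 2) * (1 - stdCDF (-(c * θ))) + (θ / c) * stdPhi (c * θ) := by
  have hb : (0:ℝ) < c ^ 2 / 2 := by positivity
  have hE : ∀ x : ℝ, stdPhi (c * (x - θ)) =
      Real.exp (-(c ^ 2 / 2) * (x - θ) ^ 2) * (Real.sqrt (2 * π))⁻¹ := by
    intro x
    have h : -(1/2) * (c * (x - θ)) ^ 2 = -(c ^ 2 / 2) * (x - θ) ^ 2 := by ring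
    rw [stdPhi_eq, h]
  have i0plain : Integrable (fun y : ℝ => Real.exp (-(c ^ 2 / 2) * y ^ 2)) :=
    integrable_exp_neg_mul_sq hb
  have i0 : Integrable (fun x : ℝ => Real.exp (-(c ^ 2 / 2) * (x - θ) ^ 2)) :=
    i0plain.comp_sub_right θ
  have i1' : Integrable (fun y : ℝ => y * Real.exp (-(c ^ 2 / 2) * y ^ 2)) :=
    integrable_mul_exp_neg_mul_sq hb
  have i2' : Integrable (fun y : ℝ => y ^ 2 * Real.exp (-(c ^ 2 / 2) * y ^ 2)) := by
    have h := integrable_rpow_mul_exp_neg_mul_sq hb (by norm_num : (-1:ℝ) < 2)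
    simpa [Real.rpow_two] using h
  have ibase : Integrable (fun y : ℝ => (y + θ) ^ 2 * Real.exp (-(c ^ 2 / 2) * y ^ 2)) := by
    have h := i2'.add ((i1'.const_mul (2 * θ)).add (i0plain.const_mul (θ ^ 2)))
    exact h.congr (Filter.Eventually.of_forall fun y => by simp only [Pi.add_apply]; ring)
  have i2 : Integrable (fun x : ℝ => x ^ 2 * Real.exp (-(c ^ 2 / 2) * (x - θ) ^ 2)) := by
    have h := ibase.comp_sub_right θ
    simpa using h
  have hphiInt : Integrable (fun x : ℝ => stdPhi (c * (x - θ))) :=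
    (i0.mul_const _).congr (Filter.Eventually.of_forall fun x => (hE x).symm)
  have hG : ∀ x : ℝ, HasDerivAt (fun x : ℝ => -((x + θ) / c) * stdPhi (c * (x - θ)))
      (c * (x ^ 2 - θ ^ 2) * stdPhi (c * (x - θ)) - (1 / c) * stdPhi (c * (x - θ))) x := by
    intro x
    have h1 : HasDerivAt (fun x : ℝ => -((x + θ) / c)) (-(1 / c)) x := by
      simpa using (((hasDerivAt_id x).add_const θ).div_const c).fun_neg
    have h2 : HasDerivAt (fun x : ℝ => c * (x - θ)) c x := by
      simpa using ((hasDerivAt_id x).sub_const θ).const_mul c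
    have h3 : HasDerivAt (fun x : ℝ => -(c * (x - θ)) ^ 2 / 2) (-(c ^ 2 * (x - θ))) x := by
      have h := ((h2.fun_pow 2).fun_neg).div_const 2
      refine h.congr_deriv ?_
      norm_num
      ring
    have h4 := h3.exp
    have h5 := h4.div_const (Real.sqrt (2 * π))
    have h6 := h1.fun_mul h5
    have heq : (fun x : ℝ => -((x + θ) / c) * stdPhi (c * (x - θ))) =
        fun x : ℝ => -((x + θ) / c) * (Real.exp (-(c * (x - θ)) ^ 2 / 2) / Real.sqrt (2 * π)) := by
      funext y; rw [stdPhi]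
    rw [heq]
    simp only [stdPhi]
    refine h6.congr_deriv ?_
    field_simp
    ring
  have hGderivInt : Integrable (fun x : ℝ =>
      c * (x ^ 2 - θ ^ 2) * stdPhi (c * (x - θ)) - (1 / c) * stdPhi (c * (x - θ))) := by
    have h := ((i2.mul_const ((Real.sqrt (2 * π))⁻¹)).const_mul c).sub
      ((i0.mul_const ((Real.sqrt (2 * π))⁻¹)).const_mul (c * θ ^ 2 + 1 / c))
    refine h.congr (Filter.Eventually.of_forall fun x => ?_)
    simp only [Pi.sub_apply]
    rw [hE x]
    ring
  have hGtend : Tendsto (fun x : ℝ => -((x + θ) / c) * stdPhi (c * (x - θ))) atTop (𝓝 0) := by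
    have key : Tendsto (fun y : ℝ => y * Real.exp (-(c ^ 2 / 2) * y ^ 2)) atTop (𝓝 0) := by
      have h := rpow_mul_exp_neg_mul_sq_isLittleO_exp_neg hb 1
      have h2 : Tendsto (fun x : ℝ => Real.exp (-(1/2 : ℝ) * x)) atTop (𝓝 0) := by
        have hmul : Tendsto (fun x : ℝ => -(1/2 : ℝ) * x) atTop atBot :=
          Tendsto.const_mul_atTop_of_neg (by norm_num) tendsto_id
        exact Real.tendsto_exp_atBot.comp hmul
      have h3 := h.tendsto_zero_of_tendsto h2
      simpa [Real.rpow_one] using h3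
    have e0 : Tendsto (fun y : ℝ => Real.exp (-(c ^ 2 / 2) * y ^ 2)) atTop (𝓝 0) := by
      have hsq : Tendsto (fun y : ℝ => y ^ 2) atTop atTop := tendsto_pow_atTop (by norm_num)
      have hneg : Tendsto (fun y : ℝ => -(c ^ 2 / 2) * y ^ 2) atTop atBot :=
        Tendsto.const_mul_atTop_of_neg (neg_lt_zero.mpr hb) hsq
      exact Real.tendsto_exp_atBot.comp hneg
    have t1 : Tendsto (fun y : ℝ => y * Real.exp (-(c ^ 2 / 2) * y ^ 2) +
        2 * θ * Real.exp (-(c ^ 2 / 2) * y ^ 2)) atTop (𝓝 0) := by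
      simpa using key.add (e0.const_mul (2 * θ))
    have t2 := t1.comp (tendsto_atTop_add_const_right atTop (-θ) tendsto_id)
    have t3 : Tendsto (fun x : ℝ => (x + θ) * Real.exp (-(c ^ 2 / 2) * (x - θ) ^ 2)) atTop (𝓝 0) := by
      refine t2.congr fun x => ?_
      simp only [Function.comp, id_eq, ← sub_eq_add_neg]
      ring
    have t4 : Tendsto (fun x : ℝ => ((x + θ) * Real.exp (-(c ^ 2 / 2) * (x - θ) ^ 2)) *
        (-(1 / c) * (Real.sqrt (2 * π))⁻¹)) atTop (𝓝 0) := by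
      simpa using t3.mul_const (-(1 / c) * (Real.sqrt (2 * π))⁻¹)
    refine t4.congr fun x => ?_
    rw [hE x]
    ring
  have hFTC : ∫ x in Ioi (0:ℝ),
      (c * (x ^ 2 - θ ^ 2) * stdPhi (c * (x - θ)) - (1 / c) * stdPhi (c * (x - θ))) =
      0 - (-((0 + θ) / c) * stdPhi (c * (0 - θ))) :=
    integral_Ioi_of_hasDerivAt_of_tendsto' (fun x _ => hG x) hGderivInt.integrableOn hGtend
  have hJ : ∫ x in Ioi (0:ℝ), stdPhi (c * (x - θ)) = c⁻¹ * (1 - stdCDF (-(c * θ))) := by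
    have h1 : ∫ x in Ioi (0:ℝ), stdPhi (c * (x - θ)) =
        ∫ x in Ioi (0:ℝ), (fun y => stdPhi (y - c * θ)) (c * x) := by
      refine setIntegral_congr_fun measurableSet_Ioi fun x _ => ?_
      simp only
      congr 1
      ring
    rw [h1, integral_comp_mul_left_Ioi (fun y => stdPhi (y - c * θ)) 0 hc, mul_zero,
      integral_Ioi_comp_sub stdPhi 0 (c * θ), zero_sub, integral_stdPhi_Ioi]
    simp [smul_eq_mul]
  have hfInt : Integrable (fun x : ℝ => x ^ 2 * (c * stdPhi (c * (x - θ)))) := by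
    have h := (i2.mul_const ((Real.sqrt (2 * π))⁻¹)).const_mul c
    refine h.congr (Filter.Eventually.of_forall fun x => ?_)
    beta_reduce
    rw [hE x]
    ring
  refine ⟨hfInt, ?_⟩
  have hdecomp : (fun x : ℝ => x ^ 2 * (c * stdPhi (c * (x - θ)))) =
      fun x : ℝ => (c * θ ^ 2 + 1 / c) * stdPhi (c * (x - θ)) +
        (c * (x ^ 2 - θ ^ 2) * stdPhi (c * (x - θ)) - (1 / c) * stdPhi (c * (x - θ))) := by
    funext x
    ring
  rw [hdecomp, integral_add ((hphiInt.const_mul _).integrableOn) hGderivInt.integrableOn,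
    integral_const_mul, hJ, hFTC]
  have h0 : c * (0 - θ) = -(c * θ) := by ring
  rw [h0, stdPhi_neg]
  field_simp
  ring

/-- For all positive parameters κ, θ, σ, the second stationary moment:
x ↦ x²·π(x) is integrable on [0,∞) and
∫₀^∞ x² π(x) dx = σ²/(2κ) + θ² + θ (σ/√(2κ)) φ(√(2κ)θ/σ)/(1 − Φ(−√(2κ)θ/σ)). -/
theorem rouPi_second_moment (κ θ σ : ℝ) (hκ : 0 < κ) (hθ : 0 < θ) (hσ : 0 < σ) :
    MeasureTheory.IntegrableOn (fun x : ℝ => x ^ 2 * rouPi κ θ σ x) (Set.Ioi 0) ∧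
      (∫ x in Set.Ioi (0 : ℝ), x ^ 2 * rouPi κ θ σ x) =
        σ ^ 2 / (2 * κ) + θ ^ 2 +
          θ * ((σ / Real.sqrt (2 * κ)) * stdPhi (Real.sqrt (2 * κ) * θ / σ) /
            (1 - stdCDF (-(Real.sqrt (2 * κ) * θ / σ)))) := by
  have h2κ : (0:ℝ) < 2 * κ := by positivity
  set s : ℝ := Real.sqrt (2 * κ) with hs_def
  have hs : 0 < s := Real.sqrt_pos.mpr h2κ
  have hs2 : s ^ 2 = 2 * κ := Real.sq_sqrt h2κ.le
  have hc : 0 < s / σ := div_pos hs hσ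
  obtain ⟨hint, hval⟩ := rou_aux (s / σ) θ hc
  have harg : ∀ y : ℝ, s * y / σ = s / σ * y := fun y => mul_div_right_comm s y σ
  have hZlt : stdCDF (-(s * θ / σ)) < 1 := stdCDF_lt_one _
  set Z : ℝ := 1 - stdCDF (-(s * θ / σ)) with hZdef
  have hZpos : 0 < Z := by rw [hZdef]; linarith
  have hrou : ∀ x, rouPi κ θ σ x = s / σ * stdPhi (s / σ * (x - θ)) / Z := by
    intro x
    rw [rouPi, harg (x - θ), ← hs_def, ← hZdef]
  constructor
  · refine ((hint.div_const Z).integrableOn).congr_fun (fun x _ => ?_) measurableSet_Ioi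
    rw [hrou x]
    ring
  · have hch : ∫ x in Ioi (0:ℝ), x ^ 2 * rouPi κ θ σ x =
        (∫ x in Ioi (0:ℝ), x ^ 2 * (s / σ * stdPhi (s / σ * (x - θ)))) / Z := by
      rw [← integral_div]
      refine setIntegral_congr_fun measurableSet_Ioi fun x _ => ?_
      rw [hrou x]
      ring
    rw [hch, hval, ← harg θ, ← hZdef, ← hs2]
    have hs0 : s ≠ 0 := hs.ne'
    have hσ0 : σ ≠ 0 := hσ.ne'
    have hZ0 : Z ≠ 0 := hZpos.ne'
    field_simp
    ring
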